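/- Conversely, if (H + γ D Dᵀ) δ = −g with H + γ D Dᵀ positive semidefinite, γ ≥ 0, ‖Dδ‖ ≤ Δ, and γ·(‖Dδ‖ − Δ) = 0, then δ is a global minimizer of q(δ') = gᵀδ' + (1/2)δ'ᵀHδ' over the set {δ' : ‖Dδ'‖ ≤ Δ}. -/

import Mathlib

open scoped Matrix

/-- Euclidean norm of a vector in `Fin n → ℝ`. -/
noncomputable def euclNorm {n : ℕ} (v : Fin n → ℝ) : ℝ := Real.sqrt (v ⬝ᵥ v)

/-- Sufficiency direction of the trust-region optimality conditions: if
`(H + γ D Dᵀ) δ = −g` with `H + γ D Dᵀ` positive semidefinite, `γ ≥ 0`,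
`‖Dδ‖ ≤ Δ` and `γ·(‖Dδ‖ − Δ) = 0`, then `δ` globally minimizes
`q(δ') = gᵀδ' + (1/2)δ'ᵀHδ'` over `{δ' : ‖Dδ'‖ ≤ Δ}`. -/
theorem trust_region_sufficient {n : ℕ}
    (g : Fin n → ℝ) (H D : Matrix (Fin n) (Fin n) ℝ)
    (hH : H.IsSymm) (hD : D.PosDef) (Δ : ℝ) (hΔ : 0 < Δ)
    (q : (Fin n → ℝ) → ℝ)
    (hq : ∀ δ', q δ' = g ⬝ᵥ δ' + (1 / 2) * (δ' ⬝ᵥ H.mulVec δ'))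
    (γ : ℝ) (hγ : 0 ≤ γ) (δ : Fin n → ℝ)
    (hsys : (H + γ • (D * Dᵀ)).mulVec δ = -g)
    (hpsd : (H + γ • (D * Dᵀ)).PosSemidef)
    (hfeas : euclNorm (D.mulVec δ) ≤ Δ)
    (hcomp : γ * (euclNorm (D.mulVec δ) - Δ) = 0) :
    ∀ δ' : Fin n → ℝ, euclNorm (D.mulVec δ') ≤ Δ → q δ ≤ q δ' := by
  intro δ' hδ'
  set M : Matrix (Fin n) (Fin n) ℝ := H + γ • (D * Dᵀ) with hM
  -- D is symmetric
  have hDsymm : Dᵀ = D := by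
    have := hD.1
    ext i j
    have h := congrFun (congrFun this i) j
    simpa [Matrix.conjTranspose_apply] using h
  -- M is symmetric
  have hMsymm : Mᵀ = M := by
    rw [hM, Matrix.transpose_add, Matrix.transpose_smul, Matrix.transpose_mul,
      Matrix.transpose_transpose, hDsymm, hH.eq]
  -- cross symmetry
  have hcross : ∀ x y : Fin n → ℝ, x ⬝ᵥ M.mulVec y = y ⬝ᵥ M.mulVec x := by
    intro x y
    rw [Matrix.dotProduct_mulVec, ← Matrix.vecMul_transpose, hMsymm,
      dotProduct_comm]
  -- quadratic form of M splits
  have hsplit : ∀ x : Fin n → ℝ,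
      x ⬝ᵥ M.mulVec x = x ⬝ᵥ H.mulVec x + γ * ((D.mulVec x) ⬝ᵥ (D.mulVec x)) := by
    intro x
    rw [hM, Matrix.add_mulVec, dotProduct_add, Matrix.smul_mulVec,
      dotProduct_smul]
    congr 1
    rw [← Matrix.mulVec_mulVec, hDsymm, Matrix.dotProduct_mulVec,
      ← Matrix.mulVec_transpose, hDsymm]
    simp
  -- enorm squared
  have hdotnn : ∀ v : Fin n → ℝ, 0 ≤ v ⬝ᵥ v := by
    intro v
    exact Finset.sum_nonneg fun i _ => mul_self_nonneg (v i)
  have hensq : ∀ v : Fin n → ℝ, v ⬝ᵥ v = (euclNorm v) ^ 2 := by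
    intro v
    rw [euclNorm, Real.sq_sqrt (hdotnn v)]
  have hennn : ∀ v : Fin n → ℝ, 0 ≤ euclNorm v := fun v => Real.sqrt_nonneg _
  -- key positivity: (δ' - δ)ᵀ M (δ' - δ) ≥ 0
  have hpos := hpsd.dotProduct_mulVec_nonneg (δ' - δ)
  simp only [star_trivial] at hpos
  -- expand it
  have hexp : (δ' - δ) ⬝ᵥ M.mulVec (δ' - δ) =
      δ' ⬝ᵥ M.mulVec δ' - 2 * (δ' ⬝ᵥ M.mulVec δ) + δ ⬝ᵥ M.mulVec δ := by
    rw [Matrix.mulVec_sub, sub_dotProduct, dotProduct_sub,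
      dotProduct_sub, hcross δ δ']
    ring
  -- use hsys to turn M δ into -g
  have hMδ : M.mulVec δ = -g := hsys
  have h1 : δ' ⬝ᵥ M.mulVec δ = -(g ⬝ᵥ δ') := by
    rw [hMδ, dotProduct_neg, dotProduct_comm]
  have h2 : δ ⬝ᵥ M.mulVec δ = -(g ⬝ᵥ δ) := by
    rw [hMδ, dotProduct_neg, dotProduct_comm]
  -- complementarity consequences
  have hγn : γ * euclNorm (D.mulVec δ) = γ * Δ := by nlinarith [hcomp]
  have hγsq : γ * (euclNorm (D.mulVec δ)) ^ 2 = γ * Δ ^ 2 := by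
    nlinarith [hγn, hennn (D.mulVec δ)]
  have hγ'sq : γ * (euclNorm (D.mulVec δ')) ^ 2 ≤ γ * Δ ^ 2 := by
    have h := hennn (D.mulVec δ')
    have hsq : (euclNorm (D.mulVec δ')) ^ 2 ≤ Δ ^ 2 := by nlinarith [hδ']
    exact mul_le_mul_of_nonneg_left hsq hγ
  -- put everything together
  rw [hq δ, hq δ']
  have e1 := hsplit δ
  have e2 := hsplit δ'
  rw [hensq (D.mulVec δ)] at e1
  rw [hensq (D.mulVec δ')] at e2
  linarith [hpos, hexp, h1, h2, e1, e2, hγsq, hγ'sq]
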